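/- Let H and Ĥ = H + E be real matrices of the same dimensions, both of full row rank. Then ‖Ĥ† − H†‖₂ ≤ 2·max{‖Ĥ†‖₂², ‖H†‖₂²}·‖E‖₂, where † denotes the Moore–Penrose pseudoinverse. -/

import Mathlib

/-- Euclidean (ℓ²) norm of a finite real vector. -/
noncomputable def euclNorm {n : Type*} [Fintype n] (x : n → ℝ) : ℝ :=
  ‖(WithLp.equiv 2 (n → ℝ)).symm x‖

/-- Spectral norm (operator norm induced by the Euclidean norm) of a real matrix. -/
noncomputable def specNorm {m n : Type*} [Fintype m] [Fintype n] (M : Matrix m n ℝ) : ℝ :=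
  ⨆ v : {v : n → ℝ // euclNorm v ≤ 1}, euclNorm (M.mulVec v.1)

/-- Smallest singular value of a real matrix `M`, computed as
`min_{‖v‖ = 1} ‖Mᵀ v‖` (the transpose formulation). -/
noncomputable def sigmaMin {m n : Type*} [Fintype m] [Fintype n] (M : Matrix m n ℝ) : ℝ :=
  ⨅ v : {v : m → ℝ // euclNorm v = 1}, euclNorm (M.transpose.mulVec v.1)

/-- Moore–Penrose pseudoinverse of a full-row-rank matrix: `M† = Mᵀ (M Mᵀ)⁻¹`. -/
noncomputable def pinvFR {m n : Type*} [Fintype m] [Fintype n] [DecidableEq m]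
    (M : Matrix m n ℝ) : Matrix n m ℝ :=
  M.transpose * (M * M.transpose)⁻¹

theorem test : True := trivial

open scoped Matrix.Norms.L2Operator
open Matrix

lemma specNorm_eq {m n : Type*} [Fintype m] [Fintype n] [DecidableEq n] (M : Matrix m n ℝ) :
    specNorm M = ‖M‖ := by
  rw [Matrix.l2_opNorm_def, ← ContinuousLinearMap.sSup_unitClosedBall_eq_norm]
  rw [specNorm, iSup]
  congr 1
  ext r
  constructor
  · rintro ⟨⟨v, hv⟩, rfl⟩
    exact ⟨(WithLp.equiv 2 (n → ℝ)).symm v, mem_closedBall_zero_iff.2 hv, rfl⟩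
  · rintro ⟨x, hx, rfl⟩
    refine ⟨⟨WithLp.equiv 2 (n → ℝ) x, ?_⟩, ?_⟩
    · simpa [euclNorm] using mem_closedBall_zero_iff.1 hx
    · simp [euclNorm]; rfl

lemma isUnit_gram {m n : ℕ} (M : Matrix (Fin m) (Fin n) ℝ) (h : M.rank = m) :
    IsUnit (M * Mᵀ) := by
  rw [← Matrix.mulVec_injective_iff_isUnit]
  have hr : (M * Mᵀ).rank = m := by rw [Matrix.rank_self_mul_transpose, h]
  have htop : LinearMap.range (M * Mᵀ).mulVecLin = ⊤ := by
    apply Submodule.eq_top_of_finrank_eq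
    have : Module.finrank ℝ (LinearMap.range (M * Mᵀ).mulVecLin) = (M * Mᵀ).rank := rfl
    rw [this, hr]; simp
  exact (LinearMap.injective_iff_surjective).2 (LinearMap.range_eq_top.1 htop)

lemma real_conjTranspose {m n : Type*} (M : Matrix m n ℝ) : Mᴴ = Mᵀ := by
  ext i j
  simp [Matrix.conjTranspose_apply]

lemma transpose_norm {m n : Type*} [Fintype m] [Fintype n] [DecidableEq m] [DecidableEq n]
    (M : Matrix m n ℝ) : ‖Mᵀ‖ = ‖M‖ := by
  rw [← real_conjTranspose, Matrix.l2_opNorm_conjTranspose]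

section Main

variable {m n : ℕ} (A B : Matrix (Fin m) (Fin n) ℝ)

lemma mul_pinvFR (hA : IsUnit (A * Aᵀ)) : A * pinvFR A = 1 := by
  rw [pinvFR, ← Matrix.mul_assoc,
    Matrix.mul_nonsing_inv _ ((Matrix.isUnit_iff_isUnit_det _).1 hA)]

lemma pinvFR_mul_self_transpose (hA : IsUnit (A * Aᵀ)) : pinvFR A * A * Aᵀ = Aᵀ := by
  rw [pinvFR, Matrix.mul_assoc, Matrix.mul_assoc,
    Matrix.nonsing_inv_mul _ ((Matrix.isUnit_iff_isUnit_det _).1 hA), Matrix.mul_one]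

lemma key_identity (hA : IsUnit (A * Aᵀ)) (hB : IsUnit (B * Bᵀ)) :
    pinvFR B - pinvFR A =
      pinvFR B * (A - B) * pinvFR A + (1 - pinvFR B * B) * (B - A)ᵀ * (A * Aᵀ)⁻¹ := by
  have e1 : pinvFR B * (A - B) * pinvFR A = pinvFR B - pinvFR B * B * pinvFR A := by
    rw [Matrix.mul_sub, Matrix.sub_mul]
    rw [Matrix.mul_assoc (pinvFR B) A (pinvFR A), mul_pinvFR A hA, Matrix.mul_one]
  have e2 : (1 - pinvFR B * B) * (B - A)ᵀ * (A * Aᵀ)⁻¹ =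
      pinvFR B * B * pinvFR A - pinvFR A := by
    have h1 : (1 - pinvFR B * B) * (B - A)ᵀ = pinvFR B * B * Aᵀ - Aᵀ := by
      rw [Matrix.transpose_sub, Matrix.sub_mul, Matrix.one_mul, Matrix.mul_sub,
        pinvFR_mul_self_transpose B hB]
      abel
    rw [h1, Matrix.sub_mul, Matrix.mul_assoc (pinvFR B * B)]
    rfl
  rw [e1, e2]
  abel

lemma proj_norm_le_one (hB : IsUnit (B * Bᵀ)) : ‖(1 : Matrix (Fin n) (Fin n) ℝ) - pinvFR B * B‖ ≤ 1 := by
  set Q : Matrix (Fin n) (Fin n) ℝ := 1 - pinvFR B * B with hQ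
  have hPP : pinvFR B * B * (pinvFR B * B) = pinvFR B * B := by
    have : pinvFR B * B * pinvFR B = pinvFR B := by
      rw [pinvFR, Matrix.mul_assoc, Matrix.mul_assoc, ← Matrix.mul_assoc B,
        ← Matrix.mul_assoc ((B * Bᵀ)⁻¹),
        Matrix.nonsing_inv_mul _ ((Matrix.isUnit_iff_isUnit_det _).1 hB), Matrix.one_mul]
    rw [← Matrix.mul_assoc, this]
  have hQQ : Q * Q = Q := by
    rw [hQ]
    simp only [Matrix.mul_sub, Matrix.sub_mul, Matrix.one_mul, Matrix.mul_one, hPP]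
    abel
  have hQT : Qᴴ = Q := by
    have hPt : (pinvFR B * B)ᵀ = pinvFR B * B := by
      rw [pinvFR, Matrix.transpose_mul, Matrix.transpose_mul, Matrix.transpose_transpose,
        Matrix.transpose_nonsing_inv, Matrix.transpose_mul, Matrix.transpose_transpose,
        Matrix.mul_assoc]
    rw [hQ, real_conjTranspose, Matrix.transpose_sub, Matrix.transpose_one, hPt]
  have h2 : ‖Q‖ * ‖Q‖ = ‖Q‖ := by
    rw [← Matrix.l2_opNorm_conjTranspose_mul_self Q, hQT, hQQ]
  nlinarith [norm_nonneg Q]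

lemma inv_gram_eq (hA : IsUnit (A * Aᵀ)) : (A * Aᵀ)⁻¹ = (pinvFR A)ᵀ * pinvFR A := by
  have hAt : (pinvFR A)ᵀ = (A * Aᵀ)⁻¹ * A := by
    rw [pinvFR, Matrix.transpose_mul, Matrix.transpose_transpose,
      Matrix.transpose_nonsing_inv, Matrix.transpose_mul, Matrix.transpose_transpose]
  rw [hAt, pinvFR, Matrix.mul_assoc, ← Matrix.mul_assoc A Aᵀ,
    Matrix.mul_nonsing_inv _ ((Matrix.isUnit_iff_isUnit_det _).1 hA), Matrix.mul_one]

end Main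

set_option maxHeartbeats 1000000 in
/-- Stewart's perturbation bound for pseudoinverses of full-row-rank matrices:
`‖(H+E)† − H†‖₂ ≤ 2 max{‖(H+E)†‖₂², ‖H†‖₂²} ‖E‖₂`. -/
theorem pinv_perturbation_bound {m n : ℕ} (H E : Matrix (Fin m) (Fin n) ℝ)
    (hH : H.rank = m) (hHE : (H + E).rank = m) :
    specNorm (pinvFR (H + E) - pinvFR H) ≤
      2 * max (specNorm (pinvFR (H + E)) ^ 2) (specNorm (pinvFR H) ^ 2) * specNorm E := by
  have hA : IsUnit (H * Hᵀ) := isUnit_gram H hH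
  have hB : IsUnit ((H + E) * (H + E)ᵀ) := isUnit_gram (H + E) hHE
  rw [specNorm_eq, specNorm_eq, specNorm_eq, specNorm_eq]
  set A := H with hAdef
  set B := H + E with hBdef
  have hE1 : A - B = -E := by rw [hAdef, hBdef]; abel
  have hE2 : B - A = E := by rw [hAdef, hBdef]; abel
  set a := ‖pinvFR A‖ with ha
  set b := ‖pinvFR B‖ with hb
  set e := ‖E‖ with he
  have key := key_identity A B hA hB
  rw [hE1, hE2] at key
  have bound1 : ‖pinvFR B * (-E) * pinvFR A‖ ≤ b * e * a := by
    calc ‖pinvFR B * (-E) * pinvFR A‖ ≤ ‖pinvFR B * (-E)‖ * a :=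
          Matrix.l2_opNorm_mul _ _
      _ ≤ b * ‖(-E : Matrix (Fin m) (Fin n) ℝ)‖ * a := by
          have := Matrix.l2_opNorm_mul (pinvFR B) (-E)
          have han : (0:ℝ) ≤ a := norm_nonneg _
          nlinarith
      _ = b * e * a := by rw [norm_neg]
  have bound2 : ‖(1 - pinvFR B * B) * Eᵀ * (A * Aᵀ)⁻¹‖ ≤ e * (a * a) := by
    have hg : ‖(A * Aᵀ)⁻¹‖ ≤ a * a := by
      rw [inv_gram_eq A hA]
      calc ‖(pinvFR A)ᵀ * pinvFR A‖ ≤ ‖(pinvFR A)ᵀ‖ * a := Matrix.l2_opNorm_mul _ _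
        _ = a * a := by rw [transpose_norm]
    have hq : ‖(1 : Matrix (Fin n) (Fin n) ℝ) - pinvFR B * B‖ ≤ 1 := proj_norm_le_one B hB
    have het : ‖Eᵀ‖ = e := transpose_norm E
    calc ‖(1 - pinvFR B * B) * Eᵀ * (A * Aᵀ)⁻¹‖
        ≤ ‖(1 - pinvFR B * B) * Eᵀ‖ * ‖(A * Aᵀ)⁻¹‖ := Matrix.l2_opNorm_mul _ _
      _ ≤ e * (a * a) := by
          have h1 := Matrix.l2_opNorm_mul (1 - pinvFR B * B) Eᵀ
          have h2 : (0:ℝ) ≤ ‖(1 - pinvFR B * B) * Eᵀ‖ := norm_nonneg _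
          have h3 : (0:ℝ) ≤ ‖(A * Aᵀ)⁻¹‖ := norm_nonneg _
          have h4 : (0:ℝ) ≤ e := norm_nonneg _
          have h5 : (0:ℝ) ≤ a := norm_nonneg _
          rw [het] at h1
          nlinarith [h1, hq, hg, h2, h3, h4, h5, mul_nonneg h4 (mul_nonneg h5 h5)]
  have htot : ‖pinvFR B - pinvFR A‖ ≤ b * e * a + e * (a * a) := by
    rw [key]
    calc ‖pinvFR B * (-E) * pinvFR A + (1 - pinvFR B * B) * Eᵀ * (A * Aᵀ)⁻¹‖
        ≤ ‖pinvFR B * (-E) * pinvFR A‖ + ‖(1 - pinvFR B * B) * Eᵀ * (A * Aᵀ)⁻¹‖ :=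
          norm_add_le _ _
      _ ≤ b * e * a + e * (a * a) := add_le_add bound1 bound2
  have hmax : a * b ≤ max (b ^ 2) (a ^ 2) := by
    rcases le_total a b with h | h
    · calc a * b ≤ b * b := by nlinarith [norm_nonneg (pinvFR A), norm_nonneg (pinvFR B)]
        _ = b ^ 2 := (sq b).symm
        _ ≤ _ := le_max_left _ _
    · calc a * b ≤ a * a := by nlinarith [norm_nonneg (pinvFR A), norm_nonneg (pinvFR B)]
        _ = a ^ 2 := (sq a).symm
        _ ≤ _ := le_max_right _ _
  have hmax2 : a ^ 2 ≤ max (b ^ 2) (a ^ 2) := le_max_right _ _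
  have h4 : (0:ℝ) ≤ e := norm_nonneg _
  have hstep1 : b * e * a ≤ max (b ^ 2) (a ^ 2) * e := by
    have : b * e * a = (a * b) * e := by ring
    rw [this]
    exact mul_le_mul_of_nonneg_right hmax h4
  have hstep2 : e * (a * a) ≤ max (b ^ 2) (a ^ 2) * e := by
    have : e * (a * a) = a ^ 2 * e := by ring
    rw [this]
    exact mul_le_mul_of_nonneg_right hmax2 h4
  calc ‖pinvFR B - pinvFR A‖ ≤ b * e * a + e * (a * a) := htot
    _ ≤ max (b ^ 2) (a ^ 2) * e + max (b ^ 2) (a ^ 2) * e := add_le_add hstep1 hstep2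
    _ = 2 * max (b ^ 2) (a ^ 2) * e := by ring
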